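/- The normalization constant of the Hurvich–Chen taper satisfies a_τ = n^{−1} Σ_{t=1}^n |1 − e^{2πit/n}|^{2τ} = binom(2τ, τ) for all integers n > 2τ ≥ 0. -/

import Mathlib

open Real Finset

/-- The normalization constant of the Hurvich–Chen taper:
`a_τ = n^{−1} Σ_{t=1}^n |1 − e^{2πit/n}|^{2τ} = C(2τ, τ)` for all `n > 2τ ≥ 0`. -/
theorem hurvich_chen_normalization (n τ : ℕ) (hn : 2 * τ < n) :
    (n : ℝ)⁻¹ * ∑ t ∈ Finset.Icc 1 n,
        ‖(1 : ℂ) - Complex.exp (2 * π * Complex.I * t / n)‖ ^ (2 * τ)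
      = (Nat.choose (2 * τ) τ : ℝ) := by
  have hn0 : 0 < n := lt_of_le_of_lt (Nat.zero_le _) hn
  have hnR : (n : ℝ) ≠ 0 := Nat.cast_ne_zero.mpr hn0.ne'
  have hnC : (n : ℂ) ≠ 0 := Nat.cast_ne_zero.mpr hn0.ne'
  set c : ℂ := Complex.exp (2 * π * Complex.I / n) with hc
  have hcn : c ^ n = 1 := by
    rw [hc, ← Complex.exp_nat_mul,
      show (n : ℂ) * (2 * ↑π * Complex.I / n) = 2 * ↑π * Complex.I by
        field_simp]
    exact Complex.exp_two_pi_mul_I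
  have habs : ‖c‖ = 1 := by
    rw [hc, show (2 * ↑π * Complex.I / n : ℂ) = (↑(2 * π / n) : ℂ) * Complex.I by
      push_cast; ring]
    exact Complex.norm_exp_ofReal_mul_I _
  have hc0 : c ≠ 0 := by
    intro h; rw [h] at habs; simp at habs
  have hz : ∀ t : ℕ, Complex.exp (2 * ↑π * Complex.I * t / n) = c ^ t := by
    intro t
    rw [hc, ← Complex.exp_nat_mul]
    congr 1; ring
  have hce : ∀ e : ℕ, ¬ (n ∣ e) → c ^ e ≠ 1 := by
    intro e hnd h1
    rw [hc, ← Complex.exp_nat_mul, Complex.exp_eq_one_iff] at h1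
    obtain ⟨k, hk⟩ := h1
    have hI : (2 * (π:ℂ) * Complex.I : ℂ) ≠ 0 := by
      simp [Complex.ext_iff, Real.pi_ne_zero, Real.pi_pos.ne']
    field_simp at hk
    have h3 : (e:ℂ) * (2 * ↑π * Complex.I) = ((k:ℂ) * n) * (2 * ↑π * Complex.I) := by
      rw [hk]; ring
    have h2 := mul_right_cancel₀ hI h3
    have h4 : (e : ℤ) = k * n := by exact_mod_cast h2
    exact hnd (Int.natCast_dvd_natCast.mp ⟨k, by linarith⟩)
  -- geometric sum
  have hgeom : ∀ e : ℕ, (∑ t ∈ Finset.Icc 1 n, (c ^ e) ^ t)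
      = if n ∣ e then (n : ℂ) else 0 := by
    intro e
    by_cases hd : n ∣ e
    · obtain ⟨m, rfl⟩ := hd
      simp [pow_mul, hcn, Nat.card_Icc]
    · rw [if_neg hd]
      have hne : c ^ e ≠ 1 := hce e hd
      have hxn : (c ^ e) ^ n = 1 := by
        rw [← pow_mul, mul_comm, pow_mul, hcn, one_pow]
      have : ∑ t ∈ Finset.Icc 1 n, (c ^ e) ^ t
          = (c ^ e) * ∑ t ∈ Finset.range n, (c ^ e) ^ t := by
        rw [Finset.mul_sum]
        rw [show Finset.Icc 1 n = Finset.map ⟨fun i => i + 1, add_left_injective 1⟩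
          (Finset.range n) from ?_]
        · rw [Finset.sum_map]
          apply Finset.sum_congr rfl
          intro i _
          simp only [Function.Embedding.coeFn_mk]
          rw [pow_succ, mul_comm]
        · ext x
          simp only [Finset.mem_Icc, Finset.mem_map, Finset.mem_range,
            Function.Embedding.coeFn_mk]
          constructor
          · rintro ⟨h1, h2⟩; exact ⟨x - 1, by omega, by omega⟩
          · rintro ⟨a, ha, rfl⟩; omega
      rw [this, geom_sum_eq hne, hxn, sub_self, zero_div, mul_zero]
  -- per-term identity
  have hterm : ∀ t : ℕ, ((‖(1 : ℂ) - c ^ t‖ ^ (2 * τ) : ℝ) : ℂ)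
      = (-1 : ℂ) ^ τ * ((1 : ℂ) - c ^ t) ^ (2 * τ) * (c ^ t) ^ ((n - 1) * τ) := by
    intro t
    set u : ℂ := c ^ t with hu
    have hu0 : u ≠ 0 := pow_ne_zero _ hc0
    have huabs : ‖u‖ = 1 := by
      rw [hu, norm_pow]
      simp [habs]
    have hun : u ^ n = 1 := by rw [hu, ← pow_mul, mul_comm, pow_mul, hcn, one_pow]
    have hconj : (starRingEnd ℂ) u = u⁻¹ := (Complex.inv_eq_conj huabs).symm
    have step1 : ((‖(1 : ℂ) - u‖ ^ (2 * τ) : ℝ) : ℂ) = ((1 - u) * ((starRingEnd ℂ) (1 - u))) ^ τ := by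
      rw [Complex.mul_conj]
      rw [← Complex.sq_norm]
      push_cast
      rw [← pow_mul, mul_comm 2 τ]
    rw [step1]
    have hsplit : (1 - u) * (starRingEnd ℂ) (1 - u) = -(1 - u)^2 * u⁻¹ := by
      rw [map_sub, map_one, hconj]
      field_simp
      ring
    have hinv : (u⁻¹) ^ τ = u ^ ((n - 1) * τ) := by
      rw [inv_pow]
      symm
      apply eq_inv_of_mul_eq_one_left
      rw [← pow_add]
      have hexp : (n - 1) * τ + τ = n * τ := by
        cases n with
        | zero => omega
        | succ m => rw [Nat.succ_sub_one]; ring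
      rw [hexp, pow_mul, hun, one_pow]
    rw [hsplit, mul_pow, hinv, neg_pow, ← pow_mul]
  -- main computation in ℂ
  have key : (∑ t ∈ Finset.Icc 1 n,
      ((‖(1 : ℂ) - c ^ t‖ ^ (2 * τ) : ℝ) : ℂ)) = (n : ℂ) * (Nat.choose (2 * τ) τ : ℂ) := by
    have expand : ∀ t : ℕ, ((‖(1 : ℂ) - c ^ t‖ ^ (2 * τ) : ℝ) : ℂ)
        = ∑ k ∈ Finset.range (2 * τ + 1),
            (-1 : ℂ) ^ (τ + k) * (Nat.choose (2 * τ) k : ℂ) * (c ^ (k + (n - 1) * τ)) ^ t := by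
      intro t
      rw [hterm t]
      have hbin : ((1 : ℂ) - c ^ t) ^ (2 * τ)
          = ∑ k ∈ Finset.range (2 * τ + 1),
              (-(c ^ t)) ^ k * (Nat.choose (2 * τ) k : ℂ) := by
        rw [sub_eq_add_neg, add_comm, add_pow]
        apply Finset.sum_congr rfl
        intro k hk
        rw [one_pow, mul_one]
      rw [hbin, Finset.mul_sum, Finset.sum_mul]
      apply Finset.sum_congr rfl
      intro k hk
      have hsw : ∀ a : ℕ, (c ^ a) ^ t = (c ^ t) ^ a := fun a => by
        rw [← pow_mul, ← pow_mul, mul_comm]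
      rw [hsw, pow_add (c ^ t) k ((n - 1) * τ), neg_pow, pow_add (-1 : ℂ) τ k]
      ring
    rw [Finset.sum_congr rfl fun t _ => expand t]
    rw [Finset.sum_comm]
    have inner : ∀ k ∈ Finset.range (2 * τ + 1),
        (∑ t ∈ Finset.Icc 1 n,
          (-1 : ℂ) ^ (τ + k) * (Nat.choose (2 * τ) k : ℂ) * (c ^ (k + (n - 1) * τ)) ^ t)
        = if k = τ then (n : ℂ) * (Nat.choose (2 * τ) τ : ℂ) else 0 := by
      intro k hk
      rw [Finset.mem_range] at hk
      rw [← Finset.mul_sum, hgeom]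
      have hdvd : n ∣ (k + (n - 1) * τ) ↔ k = τ := by
        constructor
        · rintro ⟨m, hm⟩
          have h1 : k + (n - 1) * τ = n * m := hm
          have h2 : (n - 1) * τ + τ = n * τ := by
            cases n with
            | zero => omega
            | succ p => rw [Nat.succ_sub_one]; ring
          -- k + n*τ - τ = n*m, k ≤ 2τ, 2τ < n, τ ≤ n*τ
          have hτn : τ < n := by omega
          have : m = τ := by
            rcases Nat.lt_trichotomy m τ with h | h | h
            · exfalso
              have : n * m + n ≤ n * τ := by
                calc n * m + n = n * (m + 1) := by ring
                _ ≤ n * τ := Nat.mul_le_mul_left n (by omega)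
              omega
            · exact h
            · exfalso
              have : n * τ + n ≤ n * m := by
                calc n * τ + n = n * (τ + 1) := by ring
                _ ≤ n * m := Nat.mul_le_mul_left n (by omega)
              omega
          subst this
          omega
        · rintro rfl
          refine ⟨k, ?_⟩
          cases n with
          | zero => omega
          | succ p => rw [Nat.succ_sub_one]; ring
      by_cases hkτ : k = τ
      · rw [if_pos (hdvd.mpr hkτ), if_pos hkτ, hkτ]
        have h1 : (-1 : ℂ) ^ (τ + τ) = 1 := by
          rw [← two_mul, pow_mul]; norm_num
        rw [h1, one_mul, mul_comm]
      · rw [if_neg (fun h => hkτ (hdvd.mp h)), if_neg hkτ, mul_zero]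
    rw [Finset.sum_congr rfl inner]
    rw [Finset.sum_ite_eq' (Finset.range (2 * τ + 1)) τ]
    rw [if_pos (Finset.mem_range.mpr (by omega))]
  -- conclude
  have hsum : (∑ t ∈ Finset.Icc 1 n,
      ‖(1 : ℂ) - Complex.exp (2 * ↑π * Complex.I * t / n)‖ ^ (2 * τ))
      = (n : ℝ) * (Nat.choose (2 * τ) τ : ℝ) := by
    have := key
    rw [← Complex.ofReal_inj]
    push_cast
    rw [← this]
    push_cast
    apply Finset.sum_congr rfl
    intro t _
    rw [hz t]
  rw [hsum, ← mul_assoc, inv_mul_cancel₀ hnR, one_mul]
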